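/- Lemma (set C). Let q ∈ Prob({0,1}²) and μ := μ₂. Then the set C := {(π₁, χ^{(2)}_{1|1} − χ^{(1)}_{1|1}) : (π,χ) ∈ Θ₂, μ(π,χ) = q} is nonempty and equals the set of all (Pr, ΔSe) ∈ [0,1] × [−1,1] satisfying max(−q₁₀, q₀₁ − q₁₀ + Pr − 1) ≤ Pr·ΔSe ≤ min(q₀₁, q₀₁ − q₁₀ + 1 − Pr). -/

import Mathlib

open scoped BigOperators

noncomputable section

/-- `p` is a discrete probability density on the finite set `X`,
i.e. a function `X → [0,1]` summing to `1`. -/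
def IsProb {X : Type*} [Fintype X] (p : X → ℝ) : Prop :=
  (∀ x, 0 ≤ p x ∧ p x ≤ 1) ∧ ∑ x, p x = 1

/-- `χ` is a Markov transition density: `χ x` is a probability density for each `x`. -/
def IsMarkov {X Y : Type*} [Fintype Y] (χ : X → Y → ℝ) : Prop :=
  ∀ x, IsProb (χ x)

/-- The mixture density `μ₁(π,χ)` on `{0,1}` (indices: `χ i j = χ_{j|i}`). -/
def mu1 (π : Fin 2 → ℝ) (χ : Fin 2 → Fin 2 → ℝ) : Fin 2 → ℝ :=
  fun j => ∑ i, π i * χ i j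

/-- The mixture density `μ₂(π,χ)` on `{0,1}²` (indices: `χ i j = χ_{j|i}`). -/
def mu2 (π : Fin 2 → ℝ) (χ : Fin 2 → Fin 2 × Fin 2 → ℝ) : Fin 2 × Fin 2 → ℝ :=
  fun j => ∑ i, π i * χ i j

/-- First-test characteristic: `chi1 χ i ι = χ^{(1)}_{ι|i} = χ_{ι0|i} + χ_{ι1|i}`. -/
def chi1 (χ : Fin 2 → Fin 2 × Fin 2 → ℝ) : Fin 2 → Fin 2 → ℝ :=
  fun i ι => χ i (ι, 0) + χ i (ι, 1)

/-- Second-test characteristic: `chi2 χ i ι = χ^{(2)}_{ι|i} = χ_{0ι|i} + χ_{1ι|i}`. -/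
def chi2 (χ : Fin 2 → Fin 2 × Fin 2 → ℝ) : Fin 2 → Fin 2 → ℝ :=
  fun i ι => χ i (0, ι) + χ i (1, ι)

/-- The multinomial point mass `M_{n,q}({k}) = n! ∏_x q_x^{k_x}/k_x!`. -/
def mPMF {X : Type*} [Fintype X] (n : ℕ) (q : X → ℝ) (k : X → ℕ) : ℝ :=
  (n.factorial : ℝ) * ∏ x, q x ^ k x / ((k x).factorial : ℝ)

/-- `mProb n q S` is the probability, under the multinomial distribution `M_{n,q}`
(supported on `{k : Σ_x k_x = n}`), of the event `S`. -/
def mProb {X : Type*} [Fintype X] (n : ℕ) (q : X → ℝ) (S : Set (X → ℕ)) : ℝ :=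
  ∑' k : X → ℕ, Set.indicator {k | (∑ x, k x) = n ∧ k ∈ S} (mPMF n q) k


lemma sum_prod_two (f : Fin 2 × Fin 2 → ℝ) :
    ∑ j, f j = f 0 + f (0,1) + f (1,0) + f 1 := by
  rw [Fintype.sum_prod_type]
  simp [Fin.sum_univ_two]
  rw [show f 0 = f (0,0) from rfl, show f 1 = f (1,1) from rfl]
  ring

lemma construct_mem (q : Fin 2 × Fin 2 → ℝ) (hq : IsProb q) (P D : ℝ)
    (c : Fin 2 × Fin 2 → ℝ) (hP0 : 0 < P) (hP1 : P < 1)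
    (hc : ∀ j, 0 ≤ c j ∧ c j ≤ q j)
    (hsum : c 0 + c (0,1) + c (1,0) + c 1 = P)
    (hD : c (0,1) - c (1,0) = P * D) :
    ∃ π : Fin 2 → ℝ, ∃ χ : Fin 2 → Fin 2 × Fin 2 → ℝ,
      IsProb π ∧ IsMarkov χ ∧ mu2 π χ = q ∧
      ((P, D) : ℝ × ℝ) = (π 1, chi2 χ 1 1 - chi1 χ 1 1) := by
  have hqe : q 0 + q (0,1) + q (1,0) + q 1 = 1 := by
    rw [← sum_prod_two]; exact hq.2
  have hc00 := hc 0; have hc01 := hc (0,1)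
  have hc10 := hc (1,0); have hc11 := hc 1
  have hP1' : (0:ℝ) < 1 - P := by linarith
  have hcP : ∀ j, c j ≤ P := by
    intro j; fin_cases j
    · show c 0 ≤ P; linarith
    · show c (0,1) ≤ P; linarith
    · show c (1,0) ≤ P; linarith
    · show c 1 ≤ P; linarith
  have hqc : ∀ j, q j - c j ≤ 1 - P := by
    intro j; fin_cases j
    · show q 0 - c 0 ≤ 1 - P; linarith
    · show q (0,1) - c (0,1) ≤ 1 - P; linarith
    · show q (1,0) - c (1,0) ≤ 1 - P; linarith
    · show q 1 - c 1 ≤ 1 - P; linarith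
  refine ⟨![1 - P, P], ![fun j => (q j - c j)/(1-P), fun j => c j / P], ?_, ?_, ?_, ?_⟩
  · constructor
    · intro i; fin_cases i <;> simp <;> constructor <;> linarith
    · simp [Fin.sum_univ_two]
  · intro i; fin_cases i
    · show IsProb (fun j => (q j - c j)/(1-P))
      constructor
      · intro j
        have h1 := hc j
        refine ⟨div_nonneg (by linarith) hP1'.le, ?_⟩
        rw [div_le_one hP1']; linarith [hqc j]
      · rw [sum_prod_two]
        field_simp
        linarith
    · show IsProb (fun j => c j / P)
      constructor
      · intro j
        have h1 := hc j
        refine ⟨div_nonneg h1.1 hP0.le, ?_⟩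
        rw [div_le_one hP0]; exact hcP j
      · rw [sum_prod_two]
        field_simp
        linarith
  · funext j
    show (∑ i, ![1 - P, P] i * ![fun j => (q j - c j)/(1-P), fun j => c j / P] i j) = q j
    rw [Fin.sum_univ_two]
    simp only [Matrix.cons_val_zero, Matrix.cons_val_one, Matrix.head_cons]
    field_simp
    ring
  · have hP : (![1 - P, P] : Fin 2 → ℝ) 1 = P := by simp
    have h2 : chi2 (![fun j => (q j - c j)/(1-P), fun j => c j / P]) 1 1
        - chi1 (![fun j => (q j - c j)/(1-P), fun j => c j / P]) 1 1 = D := by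
      simp only [chi1, chi2, Matrix.cons_val_one, Matrix.head_cons, Matrix.cons_val_zero]
      rw [← add_div, ← add_div, div_sub_div_same]
      rw [div_eq_iff hP0.ne']
      linarith
    rw [hP, h2]

lemma forward_ineq (q : Fin 2 × Fin 2 → ℝ) (hq : IsProb q)
    (π : Fin 2 → ℝ) (χ : Fin 2 → Fin 2 × Fin 2 → ℝ)
    (hπ : IsProb π) (hχ : IsMarkov χ) (hμ : mu2 π χ = q) :
    π 1 ∈ Set.Icc (0:ℝ) 1 ∧ (chi2 χ 1 1 - chi1 χ 1 1) ∈ Set.Icc (-1:ℝ) 1 ∧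
    max (-q (1,0)) (q (0,1) - q (1,0) + π 1 - 1) ≤ π 1 * (chi2 χ 1 1 - chi1 χ 1 1) ∧
    π 1 * (chi2 χ 1 1 - chi1 χ 1 1) ≤ min (q (0,1)) (q (0,1) - q (1,0) + 1 - π 1) := by
  have hπ0 := hπ.1 0
  have hπ1 := hπ.1 1
  have hqe : q 0 + q (0,1) + q (1,0) + q 1 = 1 := by
    rw [← sum_prod_two]; exact hq.2
  have hμ' : ∀ j, π 0 * χ 0 j + π 1 * χ 1 j = q j := by
    intro j
    have := congrFun hμ j
    simpa [mu2, Fin.sum_univ_two] using this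
  have hμ00 := hμ' 0; have hμ01 := hμ' (0,1); have hμ10 := hμ' (1,0); have hμ11 := hμ' 1
  have hχs1 : χ 1 0 + χ 1 (0,1) + χ 1 (1,0) + χ 1 1 = 1 := by
    rw [← sum_prod_two]; exact (hχ 1).2
  have h5 : π 1 * χ 1 0 + π 1 * χ 1 (0,1) + π 1 * χ 1 (1,0) + π 1 * χ 1 1 = π 1 := by
    linear_combination (π 1) * hχs1
  have hD : chi2 χ 1 1 - chi1 χ 1 1 = χ 1 (0,1) - χ 1 (1,0) := by
    simp only [chi1, chi2]
    ring_nf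
  have hb01 := (hχ 1).1 (0,1)
  have hb10 := (hχ 1).1 (1,0)
  have n1 : 0 ≤ π 0 * χ 0 0 := mul_nonneg hπ0.1 ((hχ 0).1 0).1
  have n2 : 0 ≤ π 0 * χ 0 (0,1) := mul_nonneg hπ0.1 ((hχ 0).1 (0,1)).1
  have n3 : 0 ≤ π 0 * χ 0 (1,0) := mul_nonneg hπ0.1 ((hχ 0).1 (1,0)).1
  have n4 : 0 ≤ π 0 * χ 0 1 := mul_nonneg hπ0.1 ((hχ 0).1 1).1
  have m1 : 0 ≤ π 1 * χ 1 0 := mul_nonneg hπ1.1 ((hχ 1).1 0).1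
  have m2 : 0 ≤ π 1 * χ 1 (0,1) := mul_nonneg hπ1.1 hb01.1
  have m3 : 0 ≤ π 1 * χ 1 (1,0) := mul_nonneg hπ1.1 hb10.1
  have m4 : 0 ≤ π 1 * χ 1 1 := mul_nonneg hπ1.1 ((hχ 1).1 1).1
  rw [hD]
  have hexp : π 1 * (χ 1 (0,1) - χ 1 (1,0)) = π 1 * χ 1 (0,1) - π 1 * χ 1 (1,0) := by ring
  rw [hexp]
  refine ⟨⟨hπ1.1, hπ1.2⟩, ⟨by linarith, by linarith⟩, ?_, ?_⟩
  · apply max_le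
    · linarith
    · linarith
  · apply le_min
    · linarith
    · linarith

lemma construct_mem0 (q : Fin 2 × Fin 2 → ℝ) (hq : IsProb q) (D : ℝ)
    (hD0 : -1 ≤ D) (hD1 : D ≤ 1) :
    ∃ π : Fin 2 → ℝ, ∃ χ : Fin 2 → Fin 2 × Fin 2 → ℝ,
      IsProb π ∧ IsMarkov χ ∧ mu2 π χ = q ∧
      (((0:ℝ), D) : ℝ × ℝ) = (π 1, chi2 χ 1 1 - chi1 χ 1 1) := by
  have habs : |D| ≤ 1 := abs_le.2 ⟨hD0, hD1⟩
  have habs0 := abs_nonneg D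
  have w1 : 0 ≤ max D 0 := le_max_right _ _
  have w2 : max D 0 ≤ 1 := max_le hD1 zero_le_one
  have w3 : 0 ≤ max (-D) 0 := le_max_right _ _
  have w4 : max (-D) 0 ≤ 1 := max_le (by linarith) zero_le_one
  have hm := max_zero_add_max_neg_zero_eq_abs_self D
  have hm' := max_zero_sub_max_neg_zero_eq_self D
  refine ⟨![1,0], ![q, fun j => if j.1 = 0 then (if j.2 = 0 then 1 - |D| else max D 0)
      else (if j.2 = 0 then max (-D) 0 else 0)], ?_, ?_, ?_, ?_⟩
  · constructor
    · intro i; fin_cases i <;> norm_num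
    · simp [Fin.sum_univ_two]
  · intro i; fin_cases i
    · exact hq
    · show IsProb (fun j : Fin 2 × Fin 2 => if j.1 = 0 then (if j.2 = 0 then 1 - |D| else max D 0)
        else (if j.2 = 0 then max (-D) 0 else 0))
      constructor
      · intro j
        fin_cases j
        · show 0 ≤ (if (0:Fin 2) = 0 then (if (0:Fin 2) = 0 then 1 - |D| else max D 0)
              else (if (0:Fin 2) = 0 then max (-D) 0 else 0)) ∧ _ ≤ 1
          norm_num <;> first | (constructor <;> linarith) | linarith
        · show 0 ≤ (if (0:Fin 2) = 0 then (if (1:Fin 2) = 0 then 1 - |D| else max D 0)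
              else (if (1:Fin 2) = 0 then max (-D) 0 else 0)) ∧ _ ≤ 1
          norm_num <;> first | (constructor <;> linarith) | linarith
        · show 0 ≤ (if (1:Fin 2) = 0 then (if (0:Fin 2) = 0 then 1 - |D| else max D 0)
              else (if (0:Fin 2) = 0 then max (-D) 0 else 0)) ∧ _ ≤ 1
          norm_num <;> first | (constructor <;> linarith) | linarith
        · show 0 ≤ (if (1:Fin 2) = 0 then (if (1:Fin 2) = 0 then 1 - |D| else max D 0)
              else (if (1:Fin 2) = 0 then max (-D) 0 else 0)) ∧ _ ≤ 1
          norm_num <;> first | (constructor <;> linarith) | linarith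
      · rw [sum_prod_two]
        norm_num <;> linarith
  · funext j
    show (∑ i, (![1,0] : Fin 2 → ℝ) i * (![q, _] : Fin 2 → Fin 2 × Fin 2 → ℝ) i j) = q j
    rw [Fin.sum_univ_two]
    simp
  · have h2 : chi2 (![q, fun j => if j.1 = 0 then (if j.2 = 0 then 1 - |D| else max D 0)
        else (if j.2 = 0 then max (-D) 0 else 0)]) 1 1
        - chi1 (![q, fun j => if j.1 = 0 then (if j.2 = 0 then 1 - |D| else max D 0)
        else (if j.2 = 0 then max (-D) 0 else 0)]) 1 1 = D := by
      simp only [chi1, chi2, Matrix.cons_val_one, Matrix.head_cons]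
      norm_num <;> linarith
    rw [h2]
    simp

lemma construct_mem1 (q : Fin 2 × Fin 2 → ℝ) (hq : IsProb q) :
    ∃ π : Fin 2 → ℝ, ∃ χ : Fin 2 → Fin 2 × Fin 2 → ℝ,
      IsProb π ∧ IsMarkov χ ∧ mu2 π χ = q ∧
      (((1:ℝ), q (0,1) - q (1,0)) : ℝ × ℝ) = (π 1, chi2 χ 1 1 - chi1 χ 1 1) := by
  refine ⟨![0,1], ![fun j => if j = 0 then 1 else 0, q], ?_, ?_, ?_, ?_⟩
  · constructor
    · intro i; fin_cases i <;> norm_num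
    · simp [Fin.sum_univ_two]
  · intro i; fin_cases i
    · show IsProb (fun j : Fin 2 × Fin 2 => if j = 0 then (1:ℝ) else 0)
      constructor
      · intro j
        by_cases h : j = 0 <;> simp [h]
      · rw [sum_prod_two]
        norm_num
        decide
    · exact hq
  · funext j
    show (∑ i, (![0,1] : Fin 2 → ℝ) i * (![_, q] : Fin 2 → Fin 2 × Fin 2 → ℝ) i j) = q j
    rw [Fin.sum_univ_two]
    simp
  · have h2 : chi2 (![fun j => if j = 0 then (1:ℝ) else 0, q]) 1 1
        - chi1 (![fun j => if j = 0 then (1:ℝ) else 0, q]) 1 1 = q (0,1) - q (1,0) := by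
      simp only [chi1, chi2, Matrix.cons_val_one, Matrix.head_cons, Matrix.cons_val_zero]
      ring_nf
    rw [h2]
    simp


/-- Lemma (set C): the set of pairs `(Pr, ΔSe)` compatible with `q`. -/
theorem stmt_9 (q : Fin 2 × Fin 2 → ℝ) (hq : IsProb q) :
    Set.Nonempty {x : ℝ × ℝ |
        ∃ π : Fin 2 → ℝ, ∃ χ : Fin 2 → Fin 2 × Fin 2 → ℝ,
          IsProb π ∧ IsMarkov χ ∧ mu2 π χ = q ∧
          x = (π 1, chi2 χ 1 1 - chi1 χ 1 1)} ∧
    {x : ℝ × ℝ |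
        ∃ π : Fin 2 → ℝ, ∃ χ : Fin 2 → Fin 2 × Fin 2 → ℝ,
          IsProb π ∧ IsMarkov χ ∧ mu2 π χ = q ∧
          x = (π 1, chi2 χ 1 1 - chi1 χ 1 1)} =
    {x : ℝ × ℝ |
        x.1 ∈ Set.Icc (0:ℝ) 1 ∧ x.2 ∈ Set.Icc (-1:ℝ) 1 ∧
        max (-q (1, 0)) (q (0, 1) - q (1, 0) + x.1 - 1) ≤ x.1 * x.2 ∧
        x.1 * x.2 ≤ min (q (0, 1)) (q (0, 1) - q (1, 0) + 1 - x.1)} := by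
  have hq00 := hq.1 0
  have hq01 := hq.1 (0,1)
  have hq10 := hq.1 (1,0)
  have hq11 := hq.1 1
  have hqe : q 0 + q (0,1) + q (1,0) + q 1 = 1 := by
    rw [← sum_prod_two]; exact hq.2
  constructor
  · -- Nonempty
    obtain ⟨π, χ, h1, h2, h3, h4⟩ := construct_mem1 q hq
    exact ⟨_, π, χ, h1, h2, h3, h4⟩
  · ext x
    obtain ⟨P, D⟩ := x
    simp only [Set.mem_setOf_eq]
    constructor
    · rintro ⟨π, χ, hπ, hχ, hμ, hx⟩
      rw [Prod.mk.injEq] at hx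
      obtain ⟨h1, h2⟩ := hx
      subst h1; subst h2
      exact forward_ineq q hq π χ hπ hχ hμ
    · rintro ⟨⟨hP0, hP1⟩, ⟨hD0, hD1⟩, hlo, hhi⟩
      have hlo1 : -q (1,0) ≤ P * D := le_trans (le_max_left _ _) hlo
      have hlo2 : q (0,1) - q (1,0) + P - 1 ≤ P * D := le_trans (le_max_right _ _) hlo
      have hhi1 : P * D ≤ q (0,1) := le_trans hhi (min_le_left _ _)
      have hhi2 : P * D ≤ q (0,1) - q (1,0) + 1 - P := le_trans hhi (min_le_right _ _)
      rcases eq_or_lt_of_le hP0 with h0 | h0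
      · rw [← h0]
        exact construct_mem0 q hq D hD0 hD1
      · rcases eq_or_lt_of_le hP1 with h1 | h1
        · subst h1
          have hDq : D = q (0,1) - q (1,0) := by nlinarith
          rw [hDq]
          exact construct_mem1 q hq
        · -- 0 < P < 1
          set s := P * D with hsdef
          have hsl : -P ≤ s := by nlinarith
          have hsu : s ≤ P := by nlinarith
          set L : ℝ := max 0 (P - 1 + q (0,1) + q (1,0)) with hLdef
          have hL0 : (0:ℝ) ≤ L := le_max_left _ _
          have hL1 : P - 1 + q (0,1) + q (1,0) ≤ L := le_max_right _ _
          have hLq01 : L ≤ 2 * q (0,1) - s := max_le (by linarith) (by linarith)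
          have hLq10 : L ≤ 2 * q (1,0) + s := max_le (by linarith) (by linarith)
          have hLP : L ≤ P := max_le h0.le (by linarith)
          set a : ℝ := max 0 (max s ((L + s)/2)) with hadef
          have ha0 : 0 ≤ a := le_max_left _ _
          have has : s ≤ a := le_trans (le_max_left _ _) (le_max_right _ _)
          have haL : (L + s)/2 ≤ a := le_trans (le_max_right _ _) (le_max_right _ _)
          have haq01 : a ≤ q (0,1) :=
            max_le (by linarith) (max_le (by linarith) (by linarith))
          have haq10 : a ≤ q (1,0) + s :=
            max_le (by linarith) (max_le (by linarith) (by linarith))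
          have haP : a ≤ (P + s)/2 :=
            max_le (by linarith) (max_le (by linarith) (by linarith))
          set r : ℝ := P - (2*a - s) with hrdef
          have hr0 : 0 ≤ r := by rw [hrdef]; linarith
          have hrq : r ≤ q 0 + q 1 := by rw [hrdef]; linarith
          set c00 : ℝ := min r (q 0) with hc00def
          have hc000 : 0 ≤ c00 := le_min hr0 hq00.1
          have hc00q : c00 ≤ q 0 := min_le_right _ _
          have hc00r : c00 ≤ r := min_le_left _ _
          have hc11q : r - c00 ≤ q 1 := by
            have : r - q 1 ≤ c00 := le_min (by linarith) (by linarith)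
            linarith
          refine construct_mem q hq P D
            (fun j => if j.1 = 0 then (if j.2 = 0 then c00 else a)
                      else (if j.2 = 0 then a - s else r - c00))
            h0 h1 ?_ ?_ ?_
          · intro j
            fin_cases j
            · show 0 ≤ (if (0:Fin 2) = 0 then (if (0:Fin 2) = 0 then c00 else a)
                      else (if (0:Fin 2) = 0 then a - s else r - c00)) ∧ _ ≤ q 0
              norm_num <;> first | (constructor <;> linarith) | linarith
            · show 0 ≤ (if (0:Fin 2) = 0 then (if (1:Fin 2) = 0 then c00 else a)
                      else (if (1:Fin 2) = 0 then a - s else r - c00)) ∧ _ ≤ q (0,1)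
              norm_num <;> first | (constructor <;> linarith) | linarith
            · show 0 ≤ (if (1:Fin 2) = 0 then (if (0:Fin 2) = 0 then c00 else a)
                      else (if (0:Fin 2) = 0 then a - s else r - c00)) ∧ _ ≤ q (1,0)
              norm_num <;> first | (constructor <;> linarith) | linarith
            · show 0 ≤ (if (1:Fin 2) = 0 then (if (1:Fin 2) = 0 then c00 else a)
                      else (if (1:Fin 2) = 0 then a - s else r - c00)) ∧ _ ≤ q 1
              norm_num <;> first | (constructor <;> linarith) | linarith
          · norm_num <;> linarith
          · norm_num <;> linarith


end
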